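/- Let G be an acyclic graph (symmetric irreflexive relation with no injective cycle of length at least 3) on a set X, H an acyclic graph on a set Y, and h : X → Y an injective map such that (h(x), h(y)) ∈ H whenever (x, y) ∈ G. If G is connected (any two points of X are joined by a G-path), then for all x, y ∈ X, (x, y) ∈ G if and only if (h(x), h(y)) ∈ H; i.e., h is an isomorphism of graphs onto its image. -/

import Mathlib

/-- A symmetric relation `S` is acyclic if there is no injective sequence
`(x_i)_{i ≤ n}` with `n ≥ 2`, consecutive points `S`-related, and `(x_n, x_0) ∈ S`. -/
def Acyclic {X : Type*} (S : Set (X × X)) : Prop :=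
  ¬ ∃ (n : ℕ) (x : Fin (n + 1) → X), 2 ≤ n ∧ Function.Injective x ∧
      (∀ i : Fin n, (x i.castSucc, x i.succ) ∈ S) ∧ (x (Fin.last n), x 0) ∈ S

/-- A relation `G` is connected if any two points are joined by a `G`-path. -/
def Connected {X : Type*} (G : Set (X × X)) : Prop :=
  ∀ x y : X, ∃ (n : ℕ) (p : Fin (n + 1) → X), p 0 = x ∧ p (Fin.last n) = y ∧
    ∀ i : Fin n, (p i.castSucc, p i.succ) ∈ G

lemma getVert_mem_support' {V : Type*} {G : SimpleGraph V} {u v : V} (p : G.Walk u v)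
    (i : ℕ) : p.getVert i ∈ p.support := by
  induction p generalizing i with
  | nil => simp [SimpleGraph.Walk.getVert]
  | cons h q ih =>
    cases i with
    | zero => simp [SimpleGraph.Walk.getVert]
    | succ m => simpa [SimpleGraph.Walk.getVert] using Or.inr (ih m)

lemma getVert_injOn' {V : Type*} {G : SimpleGraph V} {u v : V} (p : G.Walk u v)
    (hp : p.IsPath) : ∀ i ≤ p.length, ∀ j ≤ p.length, p.getVert i = p.getVert j → i = j := by
  induction p with
  | nil => intro i hi j hj _; simp only [SimpleGraph.Walk.length_nil] at hi hj; omega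
  | cons h q ih =>
    rw [SimpleGraph.Walk.cons_isPath_iff] at hp
    intro i hi j hj hij
    cases i with
    | zero =>
      cases j with
      | zero => rfl
      | succ m =>
        exfalso
        apply hp.2
        rw [SimpleGraph.Walk.getVert_zero, SimpleGraph.Walk.getVert_cons_succ] at hij
        rw [hij]; exact getVert_mem_support' q m
    | succ m =>
      cases j with
      | zero =>
        exfalso
        apply hp.2
        rw [SimpleGraph.Walk.getVert_zero, SimpleGraph.Walk.getVert_cons_succ] at hij
        rw [← hij]; exact getVert_mem_support' q m
      | succ k =>
        simp only [SimpleGraph.Walk.getVert_cons_succ] at hij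
        have := ih hp.1 m (by simpa using hi) k (by simpa using hj) hij
        omega

theorem stmt0 {X Y : Type*} (G : Set (X × X)) (H : Set (Y × Y))
    (hGsym : ∀ x y, (x, y) ∈ G → (y, x) ∈ G) (hGirr : ∀ x, (x, x) ∉ G)
    (hGac : Acyclic G)
    (hHsym : ∀ x y, (x, y) ∈ H → (y, x) ∈ H) (hHirr : ∀ y, (y, y) ∉ H)
    (hHac : Acyclic H)
    (h : X → Y) (hinj : Function.Injective h)
    (hhom : ∀ x y, (x, y) ∈ G → (h x, h y) ∈ H)
    (hconn : Connected G) :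
    ∀ x y, (x, y) ∈ G ↔ (h x, h y) ∈ H := by
  classical
  -- the simple graph associated to G
  let G' : SimpleGraph X :=
    { Adj := fun a b => (a, b) ∈ G
      symm := ⟨fun a b hab => hGsym a b hab⟩
      loopless := ⟨fun a ha => hGirr a ha⟩ }
  intro x y
  constructor
  · exact hhom x y
  · intro hH
    have hxy : x ≠ y := by
      rintro rfl; exact hHirr _ hH
    -- build a walk from x to y
    obtain ⟨n, p, hp0, hpl, hpe⟩ := hconn x y
    have hwalk : ∀ (m : ℕ) (q : Fin (m + 1) → X),
        (∀ i : Fin m, (q i.castSucc, q i.succ) ∈ G) → G'.Walk (q 0) (q (Fin.last m)) := by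
      intro m
      induction m with
      | zero => intro q _; exact SimpleGraph.Walk.nil
      | succ k ih =>
        intro q hq
        have w := ih (fun i => q i.succ) (fun i => by
          have := hq i.succ
          simpa only [Fin.succ_castSucc] using this)
        have hadj : G'.Adj (q 0) (q (0 : Fin (k+1)).succ) := by
          have := hq 0
          simpa using this
        exact SimpleGraph.Walk.cons hadj (w.copy rfl (by simp [Fin.last]))
    have w : G'.Walk x y := by
      have := hwalk n p hpe
      rwa [hp0, hpl] at this
    -- replace by a path
    let q := w.toPath
    have hqp : (q : G'.Walk x y).IsPath := q.2
    set m := (q : G'.Walk x y).length with hm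
    rcases Nat.lt_or_ge m 2 with hlt | hge
    · -- length 0 impossible (x ≠ y), length 1 gives the edge
      interval_cases m
      · exfalso
        exact hxy (by simpa using ((q : G'.Walk x y).eq_of_length_eq_zero hm.symm))
      · have := (q : G'.Walk x y).adj_getVert_succ (by omega : 0 < (q : G'.Walk x y).length)
        rw [SimpleGraph.Walk.getVert_zero] at this
        have h1 : (q : G'.Walk x y).getVert 1 = y :=
          (q : G'.Walk x y).getVert_of_length_le (by omega)
        rw [h1] at this
        exact this
    · -- length ≥ 2 : build a cycle in H
      exfalso
      apply hHac
      refine ⟨m, fun i => h ((q : G'.Walk x y).getVert i), hge, ?_, ?_, ?_⟩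
      · intro i j hij
        have := getVert_injOn' _ hqp i (by have := i.isLt; omega) j (by have := j.isLt; omega)
          (hinj hij)
        exact Fin.ext this
      · intro i
        exact hhom _ _ ((q : G'.Walk x y).adj_getVert_succ (by exact_mod_cast i.isLt))
      · have h0 : (q : G'.Walk x y).getVert 0 = x := SimpleGraph.Walk.getVert_zero _
        have hl : (q : G'.Walk x y).getVert m = y :=
          (q : G'.Walk x y).getVert_of_length_le (le_of_eq hm.symm)
        simp only [Fin.val_last, Fin.val_zero, h0, hl]
        exact hHsym _ _ hH
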